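/- arXiv:1608.05495 — 2 statements merged into one kernel-verified Lean document; each statement's English description precedes it below -/
import Mathlib

section
/- Let G be a connected graph of order at least two. If the strong resolving graph G_SR is bipartite, then sdim_f(G) = sdim(G). -/
open SimpleGraph

/-- `Sset G x y` is the set `S{x,y}` of vertices `z` such that `x` lies on some shortest
`y`–`z` path or `y` lies on some shortest `x`–`z` path in `G`. -/
def Sset {V : Type*} (G : SimpleGraph V) (x y : V) : Set V :=
  {z | (∃ p : G.Walk y z, p.length = G.dist y z ∧ x ∈ p.support) ∨
       (∃ p : G.Walk x z, p.length = G.dist x z ∧ y ∈ p.support)}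

/-- A strong resolving function of `G`: `g : V → [0,1]` with `g(S{x,y}) ≥ 1` for all
distinct vertices `x, y`. -/
def IsSRF {V : Type*} (G : SimpleGraph V) (g : V → ℝ) : Prop :=
  (∀ v, 0 ≤ g v ∧ g v ≤ 1) ∧ ∀ x y : V, x ≠ y → 1 ≤ ∑ᶠ z ∈ Sset G x y, g z

/-- The fractional strong metric dimension of `G`. -/
noncomputable def sdimf {V : Type*} (G : SimpleGraph V) : ℝ :=
  sInf {s : ℝ | ∃ g : V → ℝ, IsSRF G g ∧ s = ∑ᶠ v, g v}

/-- A strong resolving set of `G`: every pair of distinct vertices is strongly resolved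
by some vertex of `S` (i.e. some vertex of `S` lies in `S{x,y}`). -/
def IsSRSet {V : Type*} (G : SimpleGraph V) (S : Set V) : Prop :=
  ∀ x y : V, x ≠ y → ∃ z ∈ S, z ∈ Sset G x y

/-- The strong metric dimension of `G`: the minimum cardinality of a strong resolving set. -/
noncomputable def sdim {V : Type*} (G : SimpleGraph V) : ℕ :=
  sInf {n : ℕ | ∃ S : Set V, IsSRSet G S ∧ S.ncard = n}

/-- `u` is maximally distant from `v`: `d(u,v) ≥ d(w,v)` for every neighbor `w` of `u`. -/
def MaxDistFrom {V : Type*} (G : SimpleGraph V) (u v : V) : Prop :=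
  ∀ w : V, G.Adj u w → G.dist w v ≤ G.dist u v

/-- `u` and `v` are mutually maximally distant (MMD) in `G`. -/
def MMD {V : Type*} (G : SimpleGraph V) (u v : V) : Prop :=
  u ≠ v ∧ MaxDistFrom G u v ∧ MaxDistFrom G v u

/-- The strong resolving graph of `G` (on the ambient vertex set): `u ~ v` iff `u` MMD `v`. -/
def SRGraph {V : Type*} (G : SimpleGraph V) : SimpleGraph V where
  Adj := MMD G
  symm := ⟨fun _ _ h => ⟨h.1.symm, h.2.2, h.2.1⟩⟩
  loopless := ⟨fun _ h => h.1 rfl⟩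

/-- `M(G)`: the set of vertices that are mutually maximally distant with some vertex. -/
def Mset {V : Type*} (G : SimpleGraph V) : Set V := {x | ∃ y, MMD G x y}

/-- The matching number of `G`. -/
noncomputable def matchNum {V : Type*} (G : SimpleGraph V) : ℕ :=
  sSup {n : ℕ | ∃ M : G.Subgraph, M.IsMatching ∧ M.edgeSet.ncard = n}

/-- The corona product `G ⊙ H`. -/
def corona {V W : Type*} (G : SimpleGraph V) (H : SimpleGraph W) :
    SimpleGraph (V ⊕ V × W) where
  Adj x y :=
    match x, y with
    | Sum.inl u, Sum.inl u' => G.Adj u u'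
    | Sum.inl u, Sum.inr iw => u = iw.1
    | Sum.inr iw, Sum.inl u => iw.1 = u
    | Sum.inr iw, Sum.inr iw' => iw.1 = iw'.1 ∧ H.Adj iw.2 iw'.2
  symm := by
    refine ⟨?_⟩
    rintro (u | iw) (u' | iw') h
    · exact G.adj_symm h
    · exact h.symm
    · exact h.symm
    · exact ⟨h.1.symm, H.adj_symm h.2⟩
  loopless := by
    refine ⟨?_⟩
    rintro (u | iw) h
    · exact G.irrefl h
    · exact H.irrefl h.2

/-- `K₁ ⊙ H`: the graph obtained from `H` by adding one new vertex adjacent to every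
vertex of `H`. -/
def cone {W : Type*} (H : SimpleGraph W) : SimpleGraph (Option W) where
  Adj x y :=
    match x, y with
    | none, none => False
    | none, some _ => True
    | some _, none => True
    | some w, some w' => H.Adj w w'
  symm := by
    refine ⟨?_⟩
    rintro (_ | w) (_ | w') h
    · exact h
    · exact trivial
    · exact trivial
    · exact H.adj_symm h
  loopless := by
    refine ⟨?_⟩
    rintro (_ | w) h
    · exact h
    · exact H.irrefl h

/-- The lexicographic product `G[H]`. -/
def lexProd {V W : Type*} (G : SimpleGraph V) (H : SimpleGraph W) :
    SimpleGraph (V × W) where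
  Adj x y := G.Adj x.1 y.1 ∨ (x.1 = y.1 ∧ H.Adj x.2 y.2)
  symm := by
    refine ⟨?_⟩
    rintro x y (h | ⟨h1, h2⟩)
    · exact Or.inl (G.adj_symm h)
    · exact Or.inr ⟨h1.symm, H.adj_symm h2⟩
  loopless := by
    refine ⟨?_⟩
    rintro x (h | ⟨_, h2⟩)
    · exact G.irrefl h
    · exact H.irrefl h2

/-- `SL{x,y} = (N[x] ∪ N[y]) ∩ S{x,y}`. -/
def SLset {W : Type*} (H : SimpleGraph W) (x y : W) : Set W :=
  (insert x (H.neighborSet x) ∪ insert y (H.neighborSet y)) ∩ Sset H x y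

/-- A strong locating function of `H`. -/
def IsSLF {W : Type*} (H : SimpleGraph W) (f : W → ℝ) : Prop :=
  (∀ v, 0 ≤ f v ∧ f v ≤ 1) ∧ ∀ x y : W, x ≠ y → 1 ≤ ∑ᶠ z ∈ SLset H x y, f z

/-- `sl_f(H)`: the minimum weight of a strong locating function of `H`. -/
noncomputable def slf {W : Type*} (H : SimpleGraph W) : ℝ :=
  sInf {s : ℝ | ∃ f : W → ℝ, IsSLF H f ∧ s = ∑ᶠ v, f v}

/-- `u` has a true twin: some other vertex with the same closed neighborhood. -/
def HasTrueTwin {V : Type*} (G : SimpleGraph V) (u : V) : Prop :=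
  ∃ v : V, v ≠ u ∧ insert v (G.neighborSet v) = insert u (G.neighborSet u)

/-- `u` has a false twin: some other vertex with the same open neighborhood. -/
def HasFalseTwin {V : Type*} (G : SimpleGraph V) (u : V) : Prop :=
  ∃ v : V, v ≠ u ∧ G.neighborSet v = G.neighborSet u

/-- `m₁(G)`: number of vertices in type-1 (singleton) classes of the twin relation. -/
noncomputable def m1 {V : Type*} (G : SimpleGraph V) : ℕ :=
  {u : V | ¬ HasTrueTwin G u ∧ ¬ HasFalseTwin G u}.ncard

/-- `m₂(G)`: number of vertices in type-2 (clique) classes of the twin relation. -/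
noncomputable def m2 {V : Type*} (G : SimpleGraph V) : ℕ :=
  {u : V | HasTrueTwin G u}.ncard

/-- `m₃(G)`: number of vertices in type-3 (independent set) classes of the twin relation. -/
noncomputable def m3 {V : Type*} (G : SimpleGraph V) : ℕ :=
  {u : V | HasFalseTwin G u}.ncard

/-- The strong resolving graph of `G` (whose vertex set is `M(G)`) is Hamiltonian:
there is a cycle in `SRGraph G` passing through every vertex of `M(G)`. -/
def SRHamiltonian {V : Type*} (G : SimpleGraph V) : Prop :=
  ∃ (u : V) (p : (SRGraph G).Walk u u), p.IsCycle ∧ ∀ v ∈ Mset G, v ∈ p.support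


section AuxiliaryLemmas

variable {V : Type*} {G : SimpleGraph V}

lemma mem_Sset_fst (hG : G.Connected) {x y z : V}
    (h : G.dist y z = G.dist y x + G.dist x z) : z ∈ Sset G x y := by
  obtain ⟨p, hp⟩ := hG.exists_walk_length_eq_dist y x
  obtain ⟨q, hq⟩ := hG.exists_walk_length_eq_dist x z
  exact Or.inl ⟨p.append q, by simp [hp, hq, h], by simp⟩

lemma mem_Sset_snd (hG : G.Connected) {x y z : V}
    (h : G.dist x z = G.dist x y + G.dist y z) : z ∈ Sset G x y := by
  obtain ⟨p, hp⟩ := hG.exists_walk_length_eq_dist x y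
  obtain ⟨q, hq⟩ := hG.exists_walk_length_eq_dist y z
  exact Or.inr ⟨p.append q, by simp [hp, hq, h], by simp⟩

/-- Extension lemma: there is a vertex `u'` maximally distant from `v`
with `u` on a shortest `v`–`u'` path. -/
lemma exists_maxDistFrom [Fintype V] (hG : G.Connected) (u v : V) :
    ∃ u' : V, MaxDistFrom G u' v ∧ G.dist v u' = G.dist v u + G.dist u u' := by
  classical
  set T : Finset V := Finset.univ.filter (fun w => G.dist v w = G.dist v u + G.dist u w)
  have huT : u ∈ T := by simp [T]
  obtain ⟨w, hwT, hmax⟩ := T.exists_max_image (fun w => G.dist v w) ⟨u, huT⟩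
  have hw : G.dist v w = G.dist v u + G.dist u w := by
    simpa [T] using hwT
  refine ⟨w, ?_, hw⟩
  intro w₂ hadj
  by_contra hlt
  push_neg at hlt
  rw [show G.dist w₂ v = G.dist v w₂ from dist_comm, show G.dist w v = G.dist v w from dist_comm] at hlt
  have h1 : G.dist v w₂ ≤ G.dist v w + 1 := by
    calc G.dist v w₂ ≤ G.dist v w + G.dist w w₂ := hG.dist_triangle
    _ ≤ G.dist v w + 1 := by
        have hle : G.dist w w₂ ≤ 1 := by simpa using G.dist_le hadj.toWalk
        omega
  have heq : G.dist v w₂ = G.dist v w + 1 := by omega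
  have h2 : G.dist u w₂ ≤ G.dist u w + 1 := by
    calc G.dist u w₂ ≤ G.dist u w + G.dist w w₂ := hG.dist_triangle
    _ ≤ G.dist u w + 1 := by
        have hle : G.dist w w₂ ≤ 1 := by simpa using G.dist_le hadj.toWalk
        omega
  have h3 : G.dist v w₂ ≤ G.dist v u + G.dist u w₂ := hG.dist_triangle
  have hw₂T : w₂ ∈ T := by
    simp only [T, Finset.mem_filter, Finset.mem_univ, true_and]
    omega
  have := hmax w₂ hw₂T
  omega

/-- For any pair of distinct vertices there is an MMD pair inside `S{u,v}`. -/
lemma exists_MMD_pair [Fintype V] (hG : G.Connected) {u v : V} (huv : u ≠ v) :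
    ∃ u' v' : V, MMD G u' v' ∧ u' ∈ Sset G u v ∧ v' ∈ Sset G u v := by
  obtain ⟨u', hu'max, hu'⟩ := exists_maxDistFrom hG u v
  obtain ⟨v', hv'max, hv'⟩ := exists_maxDistFrom hG v u'
  have hd1 : 0 < G.dist v u := hG.pos_dist_of_ne (Ne.symm huv)
  have hvu' : 0 < G.dist v u' := by omega
  have huv' : G.dist u v' = G.dist u v + G.dist v v' := by
    have t1 : G.dist u v' ≤ G.dist u v + G.dist v v' := hG.dist_triangle
    have t2 : G.dist u' v' ≤ G.dist u' u + G.dist u v' := hG.dist_triangle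
    have e1 : G.dist u' v = G.dist v u' := dist_comm
    have e2 : G.dist u' u = G.dist u u' := dist_comm
    have e3 : G.dist v u = G.dist u v := dist_comm
    omega
  have hne : u' ≠ v' := by
    intro hcontra
    subst hcontra
    have : G.dist u' u' = 0 := by simp
    have e1 : G.dist u' v = G.dist v u' := dist_comm
    omega
  have hu'v' : MaxDistFrom G u' v' := by
    intro w hadj
    have h1 : G.dist w v' ≤ G.dist w v + G.dist v v' := hG.dist_triangle
    have h2 : G.dist w v ≤ G.dist u' v := hu'max w hadj
    have e1 : G.dist u' v = G.dist v u' := dist_comm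
    omega
  refine ⟨u', v', ⟨hne, hu'v', hv'max⟩, mem_Sset_fst hG hu', mem_Sset_snd hG huv'⟩

/-- If `x` is maximally distant from `y`, no vertex `z ∉ {x,y}` lies "behind" `x`:
there is no shortest `y`–`z` walk through `x`. -/
lemma not_behind (hG : G.Connected) {x y z : V} (hmd : MaxDistFrom G x y)
    (hzx : z ≠ x) (p : G.Walk y z) (hp : p.length = G.dist y z) (hx : x ∈ p.support) :
    False := by
  obtain ⟨q, r, rfl⟩ := SimpleGraph.Walk.mem_support_iff_exists_append.mp hx
  have hlen : (q.append r).length = q.length + r.length := SimpleGraph.Walk.length_append ..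
  have hq : G.dist y x ≤ q.length := G.dist_le q
  have hr : G.dist x z ≤ r.length := G.dist_le r
  have htri : G.dist y z ≤ G.dist y x + G.dist x z := hG.dist_triangle
  have hqe : q.length = G.dist y x := by omega
  have hre : r.length = G.dist x z := by omega
  have hzpos : 0 < G.dist x z := hG.pos_dist_of_ne (Ne.symm hzx)
  cases r with
  | nil => simp at hre; omega
  | cons hadj r' =>
    rename_i w
    have hr' : G.dist w z ≤ r'.length := G.dist_le r'
    have hr'len : r'.length + 1 = G.dist x z := by
      simpa using hre
    have htri2 : G.dist y z ≤ G.dist y w + G.dist w z := hG.dist_triangle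
    have hmd' : G.dist w y ≤ G.dist x y := hmd w hadj
    have e1 : G.dist w y = G.dist y w := dist_comm
    have e2 : G.dist x y = G.dist y x := dist_comm
    omega

lemma Sset_of_MMD (hG : G.Connected) {x y : V} (h : MMD G x y) :
    Sset G x y = {x, y} := by
  obtain ⟨hne, hxy, hyx⟩ := h
  apply Set.eq_of_subset_of_subset
  · rintro z (⟨p, hp, hx⟩ | ⟨p, hp, hy⟩)
    · by_contra hz
      simp only [Set.mem_insert_iff, Set.mem_singleton_iff] at hz
      push_neg at hz
      exact not_behind hG hxy hz.1 p hp hx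
    · by_contra hz
      simp only [Set.mem_insert_iff, Set.mem_singleton_iff] at hz
      push_neg at hz
      exact not_behind hG hyx hz.2 p hp hy
  · rintro z (rfl | rfl)
    · obtain ⟨p, hp⟩ := hG.exists_walk_length_eq_dist y z
      exact Or.inl ⟨p, hp, p.end_mem_support⟩
    · obtain ⟨p, hp⟩ := hG.exists_walk_length_eq_dist x z
      exact Or.inr ⟨p, hp, p.end_mem_support⟩

lemma fin2_cases {a b : Fin 2} (hab : a ≠ b) (s : Fin 2) : a = s ∨ b = s := by
  omega

/-- Rounding a fractional vertex cover of a bipartite graph (edges = MMD pairs)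
to an integral one of no larger weight. -/
lemma round_cover [Fintype V] [DecidableEq V] (c : V → Fin 2)
    (hc : ∀ x y : V, MMD G x y → c x ≠ c y) :
    ∀ n : ℕ, ∀ h : V → ℝ,
      (Finset.univ.filter (fun v => h v ≠ 0 ∧ h v ≠ 1)).card = n →
      (∀ v, 0 ≤ h v ∧ h v ≤ 1) →
      (∀ x y : V, MMD G x y → 1 ≤ h x + h y) →
      ∃ S : Finset V, (∀ x y : V, MMD G x y → x ∈ S ∨ y ∈ S) ∧
        (S.card : ℝ) ≤ ∑ v, h v := by
  intro n
  induction n using Nat.strong_induction_on with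
  | _ n IH =>
    intro h hcard hbd hcons
    classical
    set F : Finset V := Finset.univ.filter (fun v => h v ≠ 0 ∧ h v ≠ 1) with hF
    have hint : ∀ v, v ∉ F → h v = 0 ∨ h v = 1 := by
      intro v hv
      by_contra hcon
      push_neg at hcon
      exact hv (by simp [hF, hcon.1, hcon.2])
    by_cases hFe : F = ∅
    · -- base case: h is integral
      refine ⟨Finset.univ.filter (fun v => h v = 1), ?_, ?_⟩
      · intro x y hxy
        have hx := hint x (by simp [hFe])
        have hy := hint y (by simp [hFe])
        have h1 := hcons x y hxy
        rcases hx with hx | hx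
        · rcases hy with hy | hy
          · linarith
          · exact Or.inr (by simp [hy])
        · exact Or.inl (by simp [hx])
      · rw [show ((Finset.univ.filter (fun v => h v = 1)).card : ℝ)
            = ∑ v ∈ Finset.univ.filter (fun v => h v = 1), h v by
          rw [Finset.sum_congr rfl (fun v hv => (Finset.mem_filter.mp hv).2)]
          simp]
        exact Finset.sum_le_sum_of_subset_of_nonneg (Finset.subset_univ _)
          (fun v _ _ => (hbd v).1)
    · -- inductive step
      have hFne : F.Nonempty := Finset.nonempty_iff_ne_empty.mpr hFe
      have hnpos : 0 < n := by
        rw [← hcard]; exact Finset.card_pos.mpr hFne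
      -- choose the smaller side
      obtain ⟨s, hs⟩ : ∃ s : Fin 2,
          (F.filter (fun v => c v = s)).card ≤ (F.filter (fun v => c v ≠ s)).card := by
        by_cases h0 : (F.filter (fun v => c v = 0)).card ≤ (F.filter (fun v => c v ≠ 0)).card
        · exact ⟨0, h0⟩
        · refine ⟨1, ?_⟩
          have e1 : F.filter (fun v => c v ≠ (0:Fin 2)) = F.filter (fun v => c v = 1) := by
            apply Finset.filter_congr; intro v _; constructor <;> (intro hv; omega)
          have e2 : F.filter (fun v => c v ≠ (1:Fin 2)) = F.filter (fun v => c v = 0) := by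
            apply Finset.filter_congr; intro v _; constructor <;> (intro hv; omega)
          rw [e2, ← e1]
          omega
      set A : Finset V := F.filter (fun v => c v = s) with hA
      set B : Finset V := F.filter (fun v => c v ≠ s) with hB
      set f : V → ℝ := fun v => if c v = s then 1 - h v else h v with hf
      set ε : ℝ := F.inf' hFne f with hε
      have hfrac : ∀ v ∈ F, 0 < h v ∧ h v < 1 := by
        intro v hv
        simp only [hF, Finset.mem_filter] at hv
        have := hbd v
        constructor
        · cases (this.1).lt_or_eq with
          | inl h' => exact h'
          | inr h' => exact absurd h'.symm hv.2.1
        · cases (this.2).lt_or_eq with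
          | inl h' => exact h'
          | inr h' => exact absurd h' hv.2.2
      have hεpos : 0 < ε := by
        rw [hε, Finset.lt_inf'_iff]
        intro v hv
        have := hfrac v hv
        simp only [hf]
        split <;> linarith
      have hεle : ∀ v ∈ F, ε ≤ f v := fun v hv => Finset.inf'_le f hv
      obtain ⟨v₀, hv₀F, hv₀⟩ := F.exists_mem_eq_inf' hFne f
      set h' : V → ℝ := fun v =>
        if v ∈ F then (if c v = s then h v + ε else h v - ε) else h v with hh'
      -- bounds for h'
      have hbd' : ∀ v, 0 ≤ h' v ∧ h' v ≤ 1 := by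
        intro v
        simp only [hh']
        by_cases hvF : v ∈ F
        · have h1 := hεle v hvF
          have h2 := hfrac v hvF
          simp only [hf] at h1
          rw [if_pos hvF]
          by_cases hcv : c v = s
          · rw [if_pos hcv]; rw [if_pos hcv] at h1
            constructor <;> linarith
          · rw [if_neg hcv]; rw [if_neg hcv] at h1
            constructor <;> linarith
        · rw [if_neg hvF]; exact hbd v
      -- h' v₀ is integral
      have hv₀int : h' v₀ = 0 ∨ h' v₀ = 1 := by
        simp only [hh', if_pos hv₀F]
        by_cases hcv : c v₀ = s
        · right
          have hfv : f v₀ = 1 - h v₀ := by simp [hf, hcv]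
          rw [if_pos hcv, hε, hv₀, hfv]; ring
        · left
          have hfv : f v₀ = h v₀ := by simp [hf, hcv]
          rw [if_neg hcv, hε, hv₀, hfv]; ring
      -- the new fractional set is smaller
      set F' : Finset V := Finset.univ.filter (fun v => h' v ≠ 0 ∧ h' v ≠ 1) with hF'
      have hsub : F' ⊆ F.erase v₀ := by
        intro v hv
        simp only [hF', Finset.mem_filter, Finset.mem_univ, true_and] at hv
        have hvF : v ∈ F := by
          by_contra hvF
          have := hint v hvF
          have : h' v = 0 ∨ h' v = 1 := by
            simp only [hh', if_neg hvF]; exact this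
          tauto
        refine Finset.mem_erase.mpr ⟨?_, hvF⟩
        rintro rfl
        tauto
      have hlt : F'.card < n := by
        have h1 : F'.card ≤ (F.erase v₀).card := Finset.card_le_card hsub
        have h2 : (F.erase v₀).card = F.card - 1 := Finset.card_erase_of_mem hv₀F
        omega
      -- constraints for h'
      have key : ∀ x y : V, MMD G x y → c x = s → 1 ≤ h' x + h' y := by
        intro x y hxy hcx
        have hcy : c y ≠ s := by
          have := hc x y hxy; rw [hcx] at this; exact fun hh => this hh.symm
        have hxlb : h x ≤ h' x := by
          simp only [hh']
          by_cases hxF : x ∈ F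
          · rw [if_pos hxF, if_pos hcx]; linarith
          · rw [if_neg hxF]
        have h0 := hcons x y hxy
        by_cases hyF : y ∈ F
        · have hy' : h' y = h y - ε := by
            simp only [hh']; rw [if_pos hyF, if_neg hcy]
          by_cases hxF : x ∈ F
          · have hx' : h' x = h x + ε := by
              simp only [hh']; rw [if_pos hxF, if_pos hcx]
            rw [hx', hy']; linarith
          · have hx' : h' x = h x := by simp only [hh']; rw [if_neg hxF]
            rcases hint x hxF with hx0 | hx1
            · exfalso
              have := (hfrac y hyF).2
              linarith
            · have := hεle y hyF
              simp only [hf, if_neg hcy] at this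
              rw [hx', hy', hx1]; linarith
        · have hy' : h' y = h y := by simp only [hh']; rw [if_neg hyF]
          rw [hy']; linarith
      have hcons' : ∀ x y : V, MMD G x y → 1 ≤ h' x + h' y := by
        intro x y hxy
        rcases fin2_cases (hc x y hxy) s with hcx | hcy
        · exact key x y hxy hcx
        · have := key y x ⟨(hxy.1).symm, hxy.2.2, hxy.2.1⟩ hcy
          linarith
      -- weight comparison
      have hsum : ∑ v, h' v ≤ ∑ v, h v := by
        have hdiff : ∀ v, h' v - h v
            = (if v ∈ F then (if c v = s then ε else -ε) else 0) := by
          intro v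
          simp only [hh']
          by_cases hvF : v ∈ F
          · rw [if_pos hvF, if_pos hvF]
            by_cases hcv : c v = s
            · rw [if_pos hcv, if_pos hcv]; ring
            · rw [if_neg hcv, if_neg hcv]; ring
          · rw [if_neg hvF, if_neg hvF]; ring
        have e1 : ∑ v, h' v - ∑ v, h v
            = ∑ v ∈ F, (if c v = s then ε else -ε) := by
          rw [← Finset.sum_sub_distrib]
          rw [Finset.sum_congr rfl (fun v _ => hdiff v)]
          rw [Finset.sum_ite_mem]
          congr 1
          exact Finset.univ_inter F
        have e2 : ∑ v ∈ F, (if c v = s then ε else -ε)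
            = (A.card : ℝ) * ε + (B.card : ℝ) * (-ε) := by
          rw [Finset.sum_ite, Finset.sum_const, Finset.sum_const]
          simp [hA, hB, mul_comm]
        have hABcast : (A.card : ℝ) ≤ (B.card : ℝ) := by exact_mod_cast hs
        nlinarith
      obtain ⟨S, hS1, hS2⟩ := IH F'.card hlt h' rfl hbd' hcons'
      exact ⟨S, hS1, le_trans hS2 hsum⟩

end AuxiliaryLemmas

/-- If `G` is connected of order at least two and `G_SR` is bipartite,
then `sdim_f(G) = sdim(G)`. -/
theorem sdimf_eq_sdim_of_bipartite_SRGraph {V : Type*} [Fintype V] (G : SimpleGraph V)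
    (hG : G.Connected) (hcard : 2 ≤ Fintype.card V)
    (hbip : (SRGraph G).Colorable 2) :
    sdimf G = (sdim G : ℝ) :=  by
  classical
  -- the set underlying `sdim` is nonempty: the whole vertex set is a strong resolving set
  have huniv : IsSRSet G Set.univ := by
    intro x y hxy
    obtain ⟨p, hp⟩ := hG.exists_walk_length_eq_dist x y
    exact ⟨y, Set.mem_univ y, Or.inr ⟨p, hp, p.end_mem_support⟩⟩
  have hTne : {n : ℕ | ∃ S : Set V, IsSRSet G S ∧ S.ncard = n}.Nonempty :=
    ⟨(Set.univ : Set V).ncard, Set.univ, huniv, rfl⟩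
  have hmem : sdim G ∈ {n : ℕ | ∃ S : Set V, IsSRSet G S ∧ S.ncard = n} :=
    Nat.sInf_mem hTne
  obtain ⟨S₀, hS₀, hS₀card⟩ := hmem
  have hS₀fin : S₀.Finite := Set.toFinite S₀
  -- the coloring of the strong resolving graph
  obtain ⟨C⟩ := hbip
  have hc : ∀ x y : V, MMD G x y → C x ≠ C y := fun x y hxy => C.valid hxy
  have hleast : IsLeast {s : ℝ | ∃ g : V → ℝ, IsSRF G g ∧ s = ∑ᶠ v, g v} ((sdim G : ℝ)) := by
    constructor
    · -- the indicator function of a minimum strong resolving set is an SRF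
      refine ⟨fun v => if v ∈ hS₀fin.toFinset then 1 else 0, ⟨?_, ?_⟩, ?_⟩
      · intro v
        dsimp only
        split <;> norm_num
      · intro x y hxy
        obtain ⟨z, hzS, hzSset⟩ := hS₀ x y hxy
        have hfin : (Sset G x y).Finite := Set.toFinite _
        rw [finsum_mem_eq_finite_toFinset_sum _ hfin]
        have hz : z ∈ hfin.toFinset := hfin.mem_toFinset.mpr hzSset
        calc (1 : ℝ) = if z ∈ hS₀fin.toFinset then 1 else 0 := by
              rw [if_pos (hS₀fin.mem_toFinset.mpr hzS)]
          _ ≤ ∑ w ∈ hfin.toFinset, if w ∈ hS₀fin.toFinset then 1 else 0 := by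
              refine Finset.single_le_sum
                (f := fun w => if w ∈ hS₀fin.toFinset then (1:ℝ) else 0)
                (fun w _ => ?_) hz
              split <;> norm_num
      · rw [finsum_eq_sum_of_fintype]
        have hsum : ∑ v, (if v ∈ hS₀fin.toFinset then (1:ℝ) else 0)
            = (hS₀fin.toFinset.card : ℝ) := by
          rw [Finset.sum_ite_mem, Finset.univ_inter, Finset.sum_const, nsmul_eq_mul, mul_one]
        rw [hsum, ← Set.ncard_eq_toFinset_card S₀ hS₀fin, hS₀card]
    · -- every SRF has weight at least `sdim G`
      rintro r ⟨g, hg, rfl⟩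
      have hcons : ∀ x y : V, MMD G x y → 1 ≤ g x + g y := by
        intro x y hxy
        have := hg.2 x y hxy.1
        rwa [Sset_of_MMD hG hxy, finsum_mem_pair hxy.1] at this
      obtain ⟨S, hScov, hScard⟩ := round_cover C hc _ g rfl hg.1 hcons
      have hSRS : IsSRSet G (↑S : Set V) := by
        intro x y hxy
        obtain ⟨u', v', hmmd, hu', hv'⟩ := exists_MMD_pair hG hxy
        rcases hScov u' v' hmmd with hmem | hmem
        · exact ⟨u', hmem, hu'⟩
        · exact ⟨v', hmem, hv'⟩
      have hle : sdim G ≤ S.card :=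
        Nat.sInf_le ⟨(↑S : Set V), hSRS, Set.ncard_coe_finset S⟩
      rw [finsum_eq_sum_of_fintype]
      calc ((sdim G : ℝ)) ≤ (S.card : ℝ) := by exact_mod_cast hle
        _ ≤ ∑ v, g v := hScard
  exact hleast.csInf_eq
end

section
/- Let G be a connected graph. If each connected component of the strong resolving graph G_SR is a regular graph (each component being regular of some degree at least 1, possibly different degrees for different components), then sdim_f(G) = |M(G)|/2. -/
open SimpleGraph

section Aux
variable {V : Type*} {G : SimpleGraph V}

private lemma dist_split [DecidableEq V] (hG : G.Connected) {y z x : V}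
    (p : G.Walk y z) (hp : p.length = G.dist y z) (hx : x ∈ p.support) :
    G.dist y z = G.dist y x + G.dist x z ∧ (p.dropUntil x hx).length = G.dist x z := by
  have hlen : (p.takeUntil x hx).length + (p.dropUntil x hx).length = p.length := by
    rw [← Walk.length_append, p.take_spec hx]
  have h1 := SimpleGraph.dist_le (p.takeUntil x hx)
  have h2 := SimpleGraph.dist_le (p.dropUntil x hx)
  have h3 := hG.dist_triangle (u := y) (v := x) (w := z)
  omega

private lemma eq_of_maxdist [DecidableEq V] (hG : G.Connected) {x y z : V}
    (h : MaxDistFrom G x y) (p : G.Walk y z) (hp : p.length = G.dist y z)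
    (hx : x ∈ p.support) : z = x := by
  by_contra hzx
  obtain ⟨h1, h2⟩ := dist_split hG p hp hx
  obtain ⟨w, hadj, q, hq⟩ := Walk.exists_eq_cons_of_ne (Ne.symm hzx) (p.dropUntil x hx)
  have hql : (p.dropUntil x hx).length = q.length + 1 := by
    rw [hq, Walk.length_cons]
  have h4 := SimpleGraph.dist_le q
  have h5 := hG.dist_triangle (u := y) (v := w) (w := z)
  have h6 : G.dist w y ≤ G.dist x y := h w hadj
  have dc : ∀ a b : V, G.dist a b = G.dist b a := fun a b => SimpleGraph.dist_comm
  rw [dc w y, dc x y] at h6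
  omega

private lemma sset_subset (hG : G.Connected) {x y : V} (h : MMD G x y) :
    Sset G x y ⊆ {x, y} := by
  classical
  rintro z (⟨p, hp, hxs⟩ | ⟨p, hp, hys⟩)
  · exact Set.mem_insert_iff.mpr (Or.inl (eq_of_maxdist hG h.2.1 p hp hxs))
  · exact Set.mem_insert_iff.mpr (Or.inr (eq_of_maxdist hG h.2.2 p hp hys))

private lemma exists_maxdist [Fintype V] (hG : G.Connected) (x y : V) :
    ∃ u, MaxDistFrom G u y ∧ G.dist u y = G.dist u x + G.dist x y := by
  classical
  set T : Finset V := Finset.univ.filter (fun u => G.dist u y = G.dist u x + G.dist x y)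
    with hT
  have hxT : x ∈ T := by simp [hT]
  obtain ⟨u, huT, hmax⟩ := T.exists_max_image (fun u => G.dist u y) ⟨x, hxT⟩
  rw [hT, Finset.mem_filter] at huT
  refine ⟨u, ?_, huT.2⟩
  intro w hadj
  by_contra hlt
  push_neg at hlt
  have hwu : G.dist w u ≤ 1 := by
    have := SimpleGraph.dist_le hadj.symm.toWalk
    simpa using this
  have hux : G.dist w x ≤ G.dist w u + G.dist u x := hG.dist_triangle
  have h1 : G.dist w y ≤ G.dist w u + G.dist u y := hG.dist_triangle
  have h3 : G.dist w y ≤ G.dist w x + G.dist x y := hG.dist_triangle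
  have ha := huT.2
  have hwT : w ∈ T := by
    rw [hT, Finset.mem_filter]
    exact ⟨Finset.mem_univ w, by omega⟩
  exact absurd (hmax w hwT) (by omega)

private lemma mmd_symm {u v : V} (h : MMD G u v) : MMD G v u :=
  ⟨h.1.symm, h.2.2, h.2.1⟩

private lemma exists_mmd [Fintype V] (hG : G.Connected) {x y : V} (hxy : x ≠ y) :
    ∃ u v, MMD G u v ∧ G.dist y u = G.dist y x + G.dist x u ∧
      G.dist x v = G.dist x y + G.dist y v := by
  obtain ⟨u, hu, hud⟩ := exists_maxdist hG x y
  obtain ⟨v, hv, hvd⟩ := exists_maxdist hG y u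
  have dc : ∀ a b : V, G.dist a b = G.dist b a := fun a b => SimpleGraph.dist_comm
  have h3 : G.dist u v = G.dist u y + G.dist y v := by
    rw [dc u v, hvd, dc v y, dc y u]
    omega
  have huv : MaxDistFrom G u v := by
    intro w hadj
    have t1 : G.dist w v ≤ G.dist w y + G.dist y v := hG.dist_triangle
    have t2 : G.dist w y ≤ G.dist u y := hu w hadj
    omega
  have hne : u ≠ v := by
    rintro rfl
    have h0 : G.dist u u = 0 := by simp
    have hy : G.dist y u = 0 := by omega
    have hyu : y = u := (hG.dist_eq_zero_iff).mp hy
    subst hyu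
    have hx0 : G.dist x y = 0 := by
      have hd : G.dist y y = 0 := by simp
      omega
    have hdx : G.dist x y = 0 → x = y := fun h => (hG.dist_eq_zero_iff).mp h
    exact hxy (hdx hx0)
  refine ⟨u, v, ⟨hne, huv, hv⟩, ?_, ?_⟩
  · rw [dc y u, dc y x, dc x u]
    omega
  · have t1 : G.dist x v ≤ G.dist x y + G.dist y v := hG.dist_triangle
    have t2 : G.dist u v ≤ G.dist u x + G.dist x v := hG.dist_triangle
    rw [dc u x] at t2
    rw [dc u x] at hud
    omega

private lemma exists_shortest_through (hG : G.Connected) {a b c : V}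
    (h : G.dist a c = G.dist a b + G.dist b c) :
    ∃ p : G.Walk a c, p.length = G.dist a c ∧ b ∈ p.support := by
  obtain ⟨p₁, hp₁⟩ := (hG.preconnected a b).exists_walk_length_eq_dist
  obtain ⟨p₂, hp₂⟩ := (hG.preconnected b c).exists_walk_length_eq_dist
  refine ⟨p₁.append p₂, by rw [Walk.length_append, hp₁, hp₂, h], ?_⟩
  rw [Walk.mem_support_append_iff]
  exact Or.inl p₁.end_mem_support

end Aux

section Main
variable {V : Type*} {G : SimpleGraph V}

private lemma pair_bound [Fintype V] (hG : G.Connected) {g : V → ℝ} (hg : IsSRF G g)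
    {u v : V} (h : MMD G u v) : 1 ≤ g u + g v := by
  classical
  have h1 := hg.2 u v h.1
  rw [← Set.Finite.coe_toFinset (Set.toFinite (Sset G u v)), finsum_mem_coe_finset] at h1
  have hsub : (Set.toFinite (Sset G u v)).toFinset ⊆ {u, v} := by
    intro z hz
    rw [Set.Finite.mem_toFinset] at hz
    have := sset_subset hG h hz
    simpa using this
  have h2 : ∑ z ∈ (Set.toFinite (Sset G u v)).toFinset, g z ≤ ∑ z ∈ ({u, v} : Finset V), g z :=
    Finset.sum_le_sum_of_subset_of_nonneg hsub (fun i _ _ => (hg.1 i).1)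
  rw [Finset.sum_pair h.1] at h2
  linarith

private lemma lower_bound [Fintype V] (hG : G.Connected)
    (hreg : ∀ u v : V, (SRGraph G).Reachable u v →
      ((SRGraph G).neighborSet u).ncard = ((SRGraph G).neighborSet v).ncard)
    {g : V → ℝ} (hg : IsSRF G g) :
    ((Mset G).ncard : ℝ) / 2 ≤ ∑ᶠ v, g v := by
  classical
  set A := SRGraph G with hA
  set Mf : Finset V := Finset.univ.filter (fun v => v ∈ Mset G) with hMf
  set Nf : V → Finset V := fun v => Finset.univ.filter (fun u => A.Adj v u) with hNf
  set d : V → ℕ := fun v => (Nf v).card with hd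
  -- basic facts
  have hdn : ∀ v, (A.neighborSet v).ncard = d v := by
    intro v
    rw [Set.ncard_eq_toFinset_card']
    congr 1
    ext u
    simp [hNf, SimpleGraph.mem_neighborSet]
  have hadjM : ∀ {v u : V}, A.Adj v u → u ∈ Mf := by
    intro v u hadj
    simp only [hMf, Finset.mem_filter, Finset.mem_univ, true_and]
    exact ⟨v, mmd_symm hadj⟩
  have hdeg1 : ∀ v ∈ Mf, 1 ≤ d v := by
    intro v hv
    simp only [hMf, Finset.mem_filter, Finset.mem_univ, true_and] at hv
    obtain ⟨w, hw⟩ := hv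
    refine Finset.card_pos.mpr ⟨w, ?_⟩
    simp only [hNf, Finset.mem_filter, Finset.mem_univ, true_and]
    exact hw
  have hdeq : ∀ {v u : V}, A.Adj v u → d v = d u := by
    intro v u hadj
    rw [← hdn, ← hdn]
    exact hreg v u hadj.reachable
  have hpair : ∀ {v u : V}, A.Adj v u → 1 ≤ g u + g v := by
    intro v u hadj
    have := pair_bound hG hg hadj
    linarith
  -- step 1 : card ≤ S2
  have hstep1 : (Mf.card : ℝ) ≤
      ∑ v ∈ Mf, (1 / (d v : ℝ)) * ∑ u ∈ Nf v, (g u + g v) := by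
    calc (Mf.card : ℝ) = ∑ _v ∈ Mf, (1 : ℝ) := by simp
      _ ≤ _ := by
        refine Finset.sum_le_sum (fun v hv => ?_)
        have hd1 := hdeg1 v hv
        have hdpos : (0 : ℝ) < (d v : ℝ) := by exact_mod_cast hd1
        have hinner : (d v : ℝ) ≤ ∑ u ∈ Nf v, (g u + g v) := by
          have := Finset.card_nsmul_le_sum (Nf v) (fun u => g u + g v) 1
            (fun u hu => hpair (by simpa [hNf] using hu))
          simpa using this
        have := mul_le_mul_of_nonneg_left hinner (le_of_lt (one_div_pos.mpr hdpos))
        rwa [one_div_mul_cancel hdpos.ne'] at this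
  -- step 2 : S2 = double + ∑ g
  have hsplit : ∑ v ∈ Mf, (1 / (d v : ℝ)) * ∑ u ∈ Nf v, (g u + g v)
      = (∑ v ∈ Mf, ∑ u ∈ Nf v, g u / (d v : ℝ)) + ∑ v ∈ Mf, g v := by
    rw [← Finset.sum_add_distrib]
    refine Finset.sum_congr rfl (fun v hv => ?_)
    have hdpos : (0 : ℝ) < (d v : ℝ) := by exact_mod_cast hdeg1 v hv
    rw [Finset.sum_add_distrib, mul_add, Finset.mul_sum]
    congr 1
    · exact Finset.sum_congr rfl (fun u _ => by rw [one_div, inv_mul_eq_div])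
    · rw [Finset.sum_const, nsmul_eq_mul, ← mul_assoc, one_div,
        inv_mul_cancel₀ hdpos.ne', one_mul]
  -- step 3 : swap
  have hNfM : ∀ v, Nf v = Mf.filter (fun u => A.Adj v u) := by
    intro v
    ext u
    simp only [hNf, Finset.mem_filter, Finset.mem_univ, true_and]
    exact ⟨fun h => ⟨hadjM h, h⟩, fun h => h.2⟩
  have hswap : (∑ v ∈ Mf, ∑ u ∈ Nf v, g u / (d v : ℝ)) = ∑ u ∈ Mf, g u := by
    have e1 : ∀ v, (∑ u ∈ Nf v, g u / (d v : ℝ))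
        = ∑ u ∈ Mf, if A.Adj v u then g u / (d v : ℝ) else 0 := by
      intro v
      rw [hNfM v, Finset.sum_filter]
    calc (∑ v ∈ Mf, ∑ u ∈ Nf v, g u / (d v : ℝ))
        = ∑ v ∈ Mf, ∑ u ∈ Mf, if A.Adj v u then g u / (d v : ℝ) else 0 :=
          Finset.sum_congr rfl (fun v _ => e1 v)
      _ = ∑ u ∈ Mf, ∑ v ∈ Mf, if A.Adj v u then g u / (d v : ℝ) else 0 :=
          Finset.sum_comm
      _ = ∑ u ∈ Mf, g u := by
          refine Finset.sum_congr rfl (fun u hu => ?_)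
          have hdpos : (0 : ℝ) < (d u : ℝ) := by exact_mod_cast hdeg1 u hu
          have e2 : ∀ v ∈ Mf, (if A.Adj v u then g u / (d v : ℝ) else 0)
              = if A.Adj u v then g u / (d u : ℝ) else 0 := by
            intro v _
            by_cases hadj : A.Adj v u
            · rw [if_pos hadj, if_pos hadj.symm, hdeq hadj]
            · rw [if_neg hadj, if_neg (fun h => hadj h.symm)]
          rw [Finset.sum_congr rfl e2, ← Finset.sum_filter, ← hNfM u,
            Finset.sum_const, nsmul_eq_mul]
          field_simp
          exact mul_comm _ _
  -- combine
  have hM : (Mf.card : ℝ) ≤ 2 * ∑ v ∈ Mf, g v := by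
    rw [hsplit, hswap] at hstep1
    linarith
  have htot : ∑ v ∈ Mf, g v ≤ ∑ᶠ v, g v := by
    rw [finsum_eq_sum_of_fintype]
    exact Finset.sum_le_sum_of_subset_of_nonneg (Finset.subset_univ Mf)
      (fun i _ _ => (hg.1 i).1)
  have hMcard : ((Mset G).ncard : ℝ) = (Mf.card : ℝ) := by
    norm_cast
    rw [Set.ncard_eq_toFinset_card']
    congr 1
    ext u
    simp [hMf]
  rw [hMcard]
  linarith

end Main

/-- If each connected component of `G_SR` is a regular graph, then
`sdim_f(G) = |M(G)|/2`.  (Since every vertex of `M(G)` has an MMD partner, each such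
component automatically has degree at least 1; regularity of every component is expressed
by saying that any two vertices connected in `SRGraph G` have the same degree there.) -/
theorem sdimf_eq_half_Mset_of_regular_components {V : Type*} [Fintype V] (G : SimpleGraph V)
    (hG : G.Connected)
    (hreg : ∀ u v : V, (SRGraph G).Reachable u v →
      ((SRGraph G).neighborSet u).ncard = ((SRGraph G).neighborSet v).ncard) :
    sdimf G = ((Mset G).ncard : ℝ) / 2 := by
  classical
  set g₀ : V → ℝ := fun v => if v ∈ Mset G then 1 / 2 else 0 with hg₀def
  have hg₀nonneg : ∀ v, 0 ≤ g₀ v := by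
    intro v
    by_cases h : v ∈ Mset G <;> simp [hg₀def, h]
  have hg₀ : IsSRF G g₀ := by
    constructor
    · intro v
      refine ⟨hg₀nonneg v, ?_⟩
      by_cases h : v ∈ Mset G <;> simp [hg₀def, h] <;> norm_num
    · intro x y hxy
      obtain ⟨u, v, hmmd, hdu, hdv⟩ := exists_mmd hG hxy
      have hu : u ∈ Sset G x y := Or.inl (exists_shortest_through hG hdu)
      have hv : v ∈ Sset G x y := Or.inr (exists_shortest_through hG hdv)
      rw [← Set.Finite.coe_toFinset (Set.toFinite (Sset G x y)), finsum_mem_coe_finset]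
      have hsub : ({u, v} : Finset V) ⊆ (Set.toFinite (Sset G x y)).toFinset := by
        intro z hz
        rw [Set.Finite.mem_toFinset]
        rcases Finset.mem_insert.mp hz with rfl | hz
        · exact hu
        · rw [Finset.mem_singleton] at hz; subst hz; exact hv
      have h2 := Finset.sum_le_sum_of_subset_of_nonneg hsub
        (fun i _ _ => hg₀nonneg i)
      rw [Finset.sum_pair hmmd.1] at h2
      have hgu : g₀ u = 1 / 2 := if_pos (⟨v, hmmd⟩ : u ∈ Mset G)
      have hgv : g₀ v = 1 / 2 := if_pos (⟨u, mmd_symm hmmd⟩ : v ∈ Mset G)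
      rw [hgu, hgv] at h2
      linarith
  have hsum₀ : ∑ᶠ v, g₀ v = ((Mset G).ncard : ℝ) / 2 := by
    rw [finsum_eq_sum_of_fintype]
    have : ∑ v, g₀ v = ∑ v ∈ Finset.univ.filter (fun v => v ∈ Mset G), (1 / 2 : ℝ) := by
      rw [Finset.sum_filter]
    rw [this, Finset.sum_const, nsmul_eq_mul]
    have hMcard : ((Mset G).ncard : ℕ) = (Finset.univ.filter (fun v => v ∈ Mset G)).card := by
      rw [Set.ncard_eq_toFinset_card']
      congr 1
      ext u
      simp
    rw [hMcard]
    ring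
  have hub : ((Mset G).ncard : ℝ) / 2 ∈ {s : ℝ | ∃ g : V → ℝ, IsSRF G g ∧ s = ∑ᶠ v, g v} :=
    ⟨g₀, hg₀, hsum₀.symm⟩
  have hlb : ∀ s ∈ {s : ℝ | ∃ g : V → ℝ, IsSRF G g ∧ s = ∑ᶠ v, g v},
      ((Mset G).ncard : ℝ) / 2 ≤ s := by
    rintro s ⟨g, hg, rfl⟩
    exact lower_bound hG hreg hg
  rw [sdimf]
  exact le_antisymm (csInf_le ⟨_, hlb⟩ hub) (le_csInf ⟨_, hub⟩ hlb)
end
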